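/- Let F be a finite field, k ≥ 1, and x : Fin k → F an injective map. For each pair (a, b) ∈ F × F define the binary vector v_{(a,b)} : Fin k × F → ℝ by v_{(a,b)}(i, λ) = 1 if a + b·x(i) = λ and v_{(a,b)}(i, λ) = 0 otherwise. Then each v_{(a,b)} has Euclidean norm √k, for distinct pairs (a,b) ≠ (a',b') the inner product ⟨v_{(a,b)}, v_{(a',b')}⟩ is at most 1, and the coherence of the family (v_{(a,b)})_{(a,b) ∈ F × F}—i.e., the maximum over distinct pairs of |⟨v_{(a,b)}, v_{(a',b')}⟩|/k—equals 1/k. -/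

import Mathlib

open scoped RealInnerProductSpace

theorem stmt9 {F : Type*} [Field F] [Fintype F] [DecidableEq F]
    (k : ℕ) (hk : 1 ≤ k) (x : Fin k → F) (hx : Function.Injective x)
    (v : F × F → EuclideanSpace ℝ (Fin k × F))
    (hv : ∀ a b : F, v (a, b) =
      WithLp.toLp 2 (fun il : Fin k × F => if a + b * x il.1 = il.2 then (1 : ℝ) else 0)) :
    (∀ q, ‖v q‖ = Real.sqrt k) ∧
    (∀ q q' : F × F, q ≠ q' → ⟪v q, v q'⟫ ≤ 1) ∧
    (∀ q q' : F × F, q ≠ q' → |⟪v q, v q'⟫| / (k : ℝ) ≤ 1 / k) ∧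
    (∃ q q' : F × F, q ≠ q' ∧ |⟪v q, v q'⟫| / (k : ℝ) = 1 / k) := by
  have key : ∀ a b a' b' : F, ⟪v (a,b), v (a',b')⟫ =
      ((Finset.univ.filter (fun i : Fin k => a + b * x i = a' + b' * x i)).card : ℝ) := by
    intro a b a' b'
    rw [hv, hv]
    simp only [PiLp.inner_apply, PiLp.toLp_apply, RCLike.inner_apply, conj_trivial, Fintype.sum_prod_type]
    rw [Finset.card_filter, Nat.cast_sum]
    refine Finset.sum_congr rfl fun i _ => ?_
    simp only [ite_mul, one_mul, zero_mul, Finset.sum_ite_eq, Finset.mem_univ, if_true]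
    split_ifs with h1 h2 h2 <;> simp_all
  have card_le : ∀ q q' : F × F, q ≠ q' →
      (Finset.univ.filter (fun i : Fin k =>
        q.1 + q.2 * x i = q'.1 + q'.2 * x i)).card ≤ 1 := by
    rintro ⟨a, b⟩ ⟨a', b'⟩ hne
    by_cases hb : b = b'
    · have ha : a ≠ a' := fun h => hne (by simp [h, hb])
      have : (Finset.univ.filter (fun i : Fin k =>
          a + b * x i = a' + b' * x i)) = ∅ := by
        ext i
        simp only [Finset.mem_filter, Finset.mem_univ, true_and, Finset.notMem_empty,
          iff_false, hb]
        intro h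
        exact ha (by linear_combination h)
      rw [this]; simp
    · refine Finset.card_le_one.mpr fun i hi j hj => ?_
      simp only [Finset.mem_filter, Finset.mem_univ, true_and] at hi hj
      apply hx
      have hbb : b - b' ≠ 0 := sub_ne_zero.mpr hb
      have : (b - b') * x i = (b - b') * x j := by linear_combination hi - hj
      exact mul_left_cancel₀ hbb this
  refine ⟨?_, ?_, ?_, ?_⟩
  · rintro ⟨a, b⟩
    have : ⟪v (a,b), v (a,b)⟫ = (k : ℝ) := by
      rw [key]
      simp
    rw [← Real.sqrt_sq (norm_nonneg _), ← real_inner_self_eq_norm_sq, this]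
  · intro q q' h
    obtain ⟨a, b⟩ := q; obtain ⟨a', b'⟩ := q'
    rw [key]
    exact_mod_cast card_le _ _ h
  · intro q q' h
    obtain ⟨a, b⟩ := q; obtain ⟨a', b'⟩ := q'
    have h1 : |⟪v (a,b), v (a',b')⟫| ≤ 1 := by
      rw [key, abs_of_nonneg (by positivity)]
      exact_mod_cast card_le _ _ h
    exact div_le_div_of_nonneg_right h1 (by positivity)
  · have i0 : Fin k := ⟨0, hk⟩
    refine ⟨(0, 0), (-x i0, 1), by simp [Prod.ext_iff], ?_⟩
    have hcard : (Finset.univ.filter (fun i : Fin k =>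
        (0:F) + 0 * x i = -x i0 + 1 * x i)) = {i0} := by
      ext i
      simp only [Finset.mem_filter, Finset.mem_univ, true_and, Finset.mem_singleton]
      constructor
      · intro h
        exact hx (by linear_combination -h)
      · rintro rfl; ring
    rw [key, hcard]
    simp
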